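/- There exists an absolute constant C > 0 such that the following holds. Let A' ⊂ ℤ\{0} be a finite symmetric set and let L ≥ 1 satisfy 1̂_{A'}(x) + L ≥ 0 for all x ∈ 𝕋. Let t ∈ ℤ\{0}, and set A'_t := A' ∩ (A'+t) and B'_t := A'_t \ (−A'_t). Then one can write 1̂_{B'_t}(x) = Q₁(x) + Q₂(x) for functions Q₁, Q₂ : 𝕋 → ℂ satisfying |Q₁(x)| ≤ 4(1̂_{A'}(x) + L) for all x ∈ 𝕋 and ‖Q₂‖_∞ ≤ C·L³. -/

import Mathlib

/-- `e(x) = e^{2πix}`. -/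
noncomputable def eC (x : ℝ) : ℂ := Complex.exp (2 * Real.pi * Complex.I * x)

/-- `1̂_A(x) = ∑_{a ∈ A} e(ax)`. -/
noncomputable def fhat (A : Finset ℤ) (x : ℝ) : ℂ := ∑ a ∈ A, eC ((a : ℝ) * x)

/-- The translate `A + t`. -/
def shiftS (A : Finset ℤ) (t : ℤ) : Finset ℤ := A.image (· + t)

/-- The reflection `-A`. -/
def negS (A : Finset ℤ) : Finset ℤ := A.image (fun a => -a)



lemma eC_conj (x : ℝ) : (starRingEnd ℂ) (eC x) = eC (-x) := by
  rw [eC, eC, ← Complex.exp_conj]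
  congr 1
  rw [map_mul, map_mul, map_mul, Complex.conj_I]
  push_cast [Complex.conj_ofReal, map_ofNat]
  ring

lemma fhat_real (A' : Finset ℤ) (hsym : ∀ a : ℤ, a ∈ A' ↔ -a ∈ A') (x : ℝ) :
    fhat A' x = ((fhat A' x).re : ℂ) := by
  have hconj : (starRingEnd ℂ) (fhat A' x) = fhat A' x := by
    rw [fhat, map_sum]
    rw [show (∑ a ∈ A', (starRingEnd ℂ) (eC ((a:ℝ) * x))) = ∑ a ∈ A', eC (((-a : ℤ):ℝ) * x) by
      refine Finset.sum_congr rfl fun a _ => ?_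
      rw [eC_conj]; push_cast; ring_nf]
    refine Finset.sum_nbij' (fun a => -a) (fun a => -a) ?_ ?_ ?_ ?_ ?_
    · intro a ha; exact (hsym a).mp ha
    · intro a ha; exact (hsym (-a)).mpr (by simpa using ha)
    · intro a _; ring
    · intro a _; ring
    · intro a _; norm_num
  have := Complex.conj_eq_iff_re.mp hconj
  exact this.symm

lemma eC_add (x y : ℝ) : eC (x + y) = eC x * eC y := by
  simp only [eC, ← Complex.exp_add, Complex.ofReal_add]; ring_nf

lemma eC_cont : Continuous eC := by
  unfold eC; fun_prop

lemma eC_abs (x : ℝ) : ‖eC x‖ = 1 := by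
  simp [eC, Complex.norm_exp]

lemma eC_orth (n : ℤ) : ∫ y in (0:ℝ)..1, eC ((n : ℝ) * y) = if n = 0 then 1 else 0 := by
  rcases eq_or_ne n 0 with h | h
  · simp [h, eC]
  · have hc : (2 * Real.pi * Complex.I * n) ≠ 0 := by
      simp [Real.pi_ne_zero, Complex.I_ne_zero, h]
    have : ∀ y : ℝ, eC ((n:ℝ) * y) = Complex.exp ((2 * Real.pi * Complex.I * n) * y) := by
      intro y; unfold eC; push_cast; ring_nf
    simp only [this]
    rw [integral_exp_mul_complex hc]
    have h1 : Complex.exp (2 * Real.pi * Complex.I * n * 1) = 1 := by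
      rw [mul_one]
      have := Complex.exp_int_mul_two_pi_mul_I n
      rw [← this]; ring_nf
    simp only [mul_zero, Complex.ofReal_zero, Complex.exp_zero, mul_one]
    norm_num
    rw [mul_one] at h1
    rw [h1, sub_self, zero_div]
    simp [h]

attribute [continuity, fun_prop] eC_cont

lemma key (C B : Finset ℤ) (r s : ℤ) (u : ℝ) (v w : ℤ → ℂ) :
    (∫ y in (0:ℝ)..1, (∑ a ∈ C, v a * eC (((a + r : ℤ) : ℝ) * y)) *
        (∑ b ∈ B, w b * eC (((b + s : ℤ) : ℝ) * (u - y))))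
    = ∑ b ∈ B.filter (fun b => b + s - r ∈ C), v (b + s - r) * w b * eC (((b + s : ℤ) : ℝ) * u) := by
  have hpt : ∀ y : ℝ, (∑ a ∈ C, v a * eC (((a + r : ℤ) : ℝ) * y)) *
        (∑ b ∈ B, w b * eC (((b + s : ℤ) : ℝ) * (u - y)))
      = ∑ a ∈ C, ∑ b ∈ B, (v a * w b * eC (((b + s : ℤ):ℝ) * u)) * eC (((a + r - b - s : ℤ) : ℝ) * y) := by
    intro y
    rw [Finset.sum_mul_sum]
    refine Finset.sum_congr rfl fun a _ => Finset.sum_congr rfl fun b _ => ?_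
    have harg : ((a + r : ℤ) : ℝ) * y + ((b + s : ℤ) : ℝ) * (u - y)
        = ((b + s : ℤ) : ℝ) * u + ((a + r - b - s : ℤ) : ℝ) * y := by push_cast; ring
    rw [mul_mul_mul_comm, ← eC_add, harg, eC_add]; ring
  simp only [hpt]
  rw [intervalIntegral.integral_finset_sum]
  swap
  · intro a _; apply Continuous.intervalIntegrable; continuity
  have : ∀ a ∈ C, (∫ y in (0:ℝ)..1, ∑ b ∈ B,
        (v a * w b * eC (((b + s : ℤ):ℝ) * u)) * eC (((a + r - b - s : ℤ) : ℝ) * y))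
      = ∑ b ∈ B, (v a * w b * eC (((b + s : ℤ):ℝ) * u)) * (if a + r - b - s = 0 then 1 else 0) := by
    intro a _
    rw [intervalIntegral.integral_finset_sum]
    swap
    · intro b _; apply Continuous.intervalIntegrable; continuity
    refine Finset.sum_congr rfl fun b _ => ?_
    rw [intervalIntegral.integral_const_mul, eC_orth]
  rw [Finset.sum_congr rfl this, Finset.sum_comm, Finset.sum_filter]
  refine Finset.sum_congr rfl fun b _ => ?_
  have hiff : ∀ a : ℤ, (a + r - b - s = 0) ↔ (a = b + s - r) := by intro a; omega
  simp only [hiff, mul_ite, mul_one, mul_zero]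
  rw [Finset.sum_ite_eq' C (b + s - r) (fun a => v a * w b * eC (((b + s : ℤ):ℝ) * u))]


section main
variable (A' : Finset ℤ) (L : ℝ)

noncomputable def Pf (x : ℝ) : ℝ := (fhat A' x).re + 2*L

variable {A' L}

lemma Pf_nonneg (hL : 1 ≤ L) (hpos : ∀ x : ℝ, 0 ≤ (fhat A' x).re + L) (x : ℝ) :
    0 ≤ Pf A' L x := by
  have := hpos x
  have : (0:ℝ) ≤ L := le_trans zero_le_one hL
  unfold Pf; nlinarith [hpos x]

lemma norm_fhat_le (hsym : ∀ a : ℤ, a ∈ A' ↔ -a ∈ A') (hL : 1 ≤ L)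
    (hpos : ∀ x : ℝ, 0 ≤ (fhat A' x).re + L) (x : ℝ) :
    ‖fhat A' x‖ ≤ Pf A' L x := by
  rw [fhat_real A' hsym x, Complex.norm_real, Real.norm_eq_abs]
  unfold Pf
  rcases abs_cases ((fhat A' x).re) with ⟨h, _⟩ | ⟨h, _⟩ <;> nlinarith [hpos x]

lemma Pf_cont : Continuous (Pf A' L) := by
  unfold Pf fhat
  fun_prop

attribute [fun_prop] Pf_cont

lemma fhat_cont (S : Finset ℤ) : Continuous (fhat S) := by
  unfold fhat; fun_prop

lemma sum_T (h0 : (0:ℤ) ∉ A') (hsym : ∀ a : ℤ, a ∈ A' ↔ -a ∈ A') (y : ℝ) :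
    ((Pf A' L y : ℝ) : ℂ)
      = ∑ a ∈ insert 0 A', (if a = 0 then (2*L:ℂ) else 1) * eC (((a : ℤ):ℝ) * y) := by
  rw [Finset.sum_insert h0]
  simp only [if_pos rfl]
  rw [show (∑ a ∈ A', (if a = 0 then (2*L:ℂ) else 1) * eC (((a : ℤ):ℝ) * y))
      = ∑ a ∈ A', eC (((a : ℤ):ℝ) * y) by
    refine Finset.sum_congr rfl fun a ha => ?_
    rw [if_neg (by rintro rfl; exact h0 ha), one_mul]]
  unfold Pf
  rw [← fhat]
  push_cast
  rw [← fhat_real A' hsym y]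
  simp [eC]
  ring
end main

section main2
variable {A' : Finset ℤ} {L : ℝ}

lemma eC_zero_arg (u : ℝ) : eC (((0:ℤ):ℝ) * u) = 1 := by norm_num [eC]

lemma conv_PP (h0 : (0:ℤ) ∉ A') (hsym : ∀ a : ℤ, a ∈ A' ↔ -a ∈ A') (u : ℝ) :
    (∫ y in (0:ℝ)..1, Pf A' L y * Pf A' L (u - y)) = (fhat A' u).re + (2*L)^2 := by
  have hkey := key (insert 0 A') (insert 0 A') 0 0 u
      (fun a => if a = 0 then (2*L:ℂ) else 1) (fun a => if a = 0 then (2*L:ℂ) else 1)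
  simp only [add_zero, sub_zero] at hkey
  have hfilter : (insert 0 A').filter (fun b => b ∈ insert 0 A') = insert 0 A' :=
    Finset.filter_true_of_mem (fun x hx => hx)
  rw [hfilter] at hkey
  have hsum : (∑ b ∈ insert 0 A', ((if b = 0 then (2*L:ℂ) else 1) * (if b = 0 then (2*L:ℂ) else 1))
        * eC (((b:ℤ):ℝ) * u)) = fhat A' u + ((2*L:ℝ):ℂ)^2 := by
    rw [Finset.sum_insert h0, if_pos rfl, eC_zero_arg, mul_one,
      show (∑ b ∈ A', ((if b = 0 then (2*L:ℂ) else 1) * (if b = 0 then (2*L:ℂ) else 1))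
          * eC (((b:ℤ):ℝ) * u)) = fhat A' u from Finset.sum_congr rfl fun a ha => by
        rw [if_neg (by rintro rfl; exact h0 ha)]; ring]
    push_cast
    ring
  have hC : (∫ y in (0:ℝ)..1, ((Pf A' L y * Pf A' L (u-y) : ℝ):ℂ))
      = fhat A' u + ((2*L:ℝ):ℂ)^2 := by
    rw [show (fun y : ℝ => ((Pf A' L y * Pf A' L (u-y) : ℝ):ℂ))
        = fun y : ℝ => (∑ a ∈ insert 0 A', (if a = 0 then (2*L:ℂ) else 1) * eC (((a:ℤ):ℝ) * y)) *
          (∑ b ∈ insert 0 A', (if b = 0 then (2*L:ℂ) else 1) * eC (((b:ℤ):ℝ) * (u - y))) from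
      funext fun y => by push_cast; rw [← sum_T h0 hsym, ← sum_T h0 hsym]]
    rw [hkey, hsum]
  rw [intervalIntegral.integral_ofReal, fhat_real A' hsym u] at hC
  exact_mod_cast hC

lemma int_P (h0 : (0:ℤ) ∉ A') (hsym : ∀ a : ℤ, a ∈ A' ↔ -a ∈ A') :
    (∫ y in (0:ℝ)..1, Pf A' L y) = 2*L := by
  have hC : (∫ y in (0:ℝ)..1, ((Pf A' L y : ℝ):ℂ)) = ((2*L:ℝ):ℂ) := by
    rw [show (fun y : ℝ => ((Pf A' L y : ℝ):ℂ))
        = fun y : ℝ => (∑ a ∈ insert 0 A', (if a = 0 then (2*L:ℂ) else 1) * eC (((a:ℤ):ℝ) * y)) from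
      funext fun y => by rw [← sum_T h0 hsym]]
    rw [intervalIntegral.integral_finset_sum (fun a _ => by
      apply Continuous.intervalIntegrable
      exact continuous_const.mul (eC_cont.comp (by fun_prop)))]
    rw [show (∑ a ∈ insert 0 A', ∫ y in (0:ℝ)..1, (if a = 0 then (2*L:ℂ) else 1) * eC (((a:ℤ):ℝ) * y))
        = ∑ a ∈ insert 0 A', (if a = 0 then (2*L:ℂ) else 1) * (if a = 0 then (1:ℂ) else 0) from
      Finset.sum_congr rfl fun a _ => by
        rw [intervalIntegral.integral_const_mul, eC_orth]]
    rw [Finset.sum_insert h0, if_pos rfl, if_pos rfl, mul_one,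
      show (∑ a ∈ A', (if a = 0 then (2*L:ℂ) else 1) * (if a = 0 then (1:ℂ) else 0)) = 0 from
      Finset.sum_eq_zero fun a ha => by
        have hne : a ≠ 0 := by rintro rfl; exact h0 ha
        simp [hne], add_zero]
    push_cast
    ring
  rw [intervalIntegral.integral_ofReal] at hC
  exact_mod_cast hC

end main2

section main3
variable {A' : Finset ℤ} {L : ℝ}

lemma mem_shiftS {A : Finset ℤ} {t m : ℤ} : m ∈ shiftS A t ↔ m - t ∈ A := by
  simp only [shiftS, Finset.mem_image]
  constructor
  · rintro ⟨a, ha, rfl⟩; simpa using ha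
  · intro h; exact ⟨m - t, h, by ring⟩

lemma mem_negS {A : Finset ℤ} {m : ℤ} : m ∈ negS A ↔ -m ∈ A := by
  simp only [negS, Finset.mem_image]
  constructor
  · rintro ⟨a, ha, rfl⟩; simpa using ha
  · intro h; exact ⟨-m, h, by ring⟩

lemma J2_eq (t : ℤ) (x : ℝ) :
    (∫ y in (0:ℝ)..1, (∑ a ∈ A', eC ((a:ℝ) * y)) * (∑ b ∈ A', eC (((b + t:ℤ):ℝ) * (x - y))))
      = fhat (A' ∩ shiftS A' t) x := by
  have hkey := key A' A' 0 t x (fun _ => 1) (fun _ => 1)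
  simp only [one_mul, add_zero, sub_zero] at hkey
  push_cast at hkey ⊢
  rw [hkey, fhat,
    show A' ∩ shiftS A' t = (A'.filter (fun b => b + t ∈ A')).image (· + t) by
      ext m
      simp only [Finset.mem_image, Finset.mem_filter, Finset.mem_inter, mem_shiftS]
      constructor
      · rintro ⟨hm, hmt⟩; exact ⟨m - t, ⟨hmt, by simpa using hm⟩, by ring⟩
      · rintro ⟨b, ⟨hb, hbt⟩, rfl⟩; exact ⟨hbt, by simpa using hb⟩,
    Finset.sum_image (fun a _ b _ h => by omega)]
  push_cast
  rfl

lemma J3_inner (t : ℤ) (u : ℝ) :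
    (∫ y in (0:ℝ)..1, (∑ a ∈ A', eC (((a + t:ℤ):ℝ) * y)) *
        (∑ b ∈ A', eC (((b + -t:ℤ):ℝ) * (u - y))))
      = ∑ b ∈ A'.filter (fun b => b + -t - t ∈ A'), eC (((b + -t:ℤ):ℝ) * u) := by
  have hkey := key A' A' t (-t) u (fun _ => 1) (fun _ => 1)
  simpa using hkey

lemma J3_eq (hsym : ∀ a : ℤ, a ∈ A' ↔ -a ∈ A') (t : ℤ) (x : ℝ) :
    (∫ y in (0:ℝ)..1, (∑ a ∈ A', eC ((a:ℝ) * y)) *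
        (∑ b ∈ A'.filter (fun b => b + -t - t ∈ A'), eC (((b + -t:ℤ):ℝ) * (x - y))))
      = fhat ((A' ∩ shiftS A' t) ∩ negS (A' ∩ shiftS A' t)) x := by
  have hkey := key A' (A'.filter (fun b => b + -t - t ∈ A')) 0 (-t) x (fun _ => 1) (fun _ => 1)
  simp only [one_mul, add_zero, sub_zero] at hkey
  push_cast at hkey ⊢
  rw [hkey, fhat,
    show (A' ∩ shiftS A' t) ∩ negS (A' ∩ shiftS A' t)
        = ((A'.filter (fun b => b + -t - t ∈ A')).filter (fun b => b + -t ∈ A')).image (· + -t) by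
      ext m
      simp only [Finset.mem_image, Finset.mem_filter, Finset.mem_inter, mem_shiftS, mem_negS]
      constructor
      · rintro ⟨⟨hm, hmt⟩, hneg, hnegt⟩
        have hmt' : m + t ∈ A' := by
          have h1 : -(m + t) ∈ A' := by
            simpa [show -m - t = -(m+t) by ring] using hnegt
          exact (hsym (m+t)).mpr h1
        exact ⟨m + t, ⟨⟨hmt', by simpa using hmt⟩, by simpa using hm⟩, by ring⟩
      · rintro ⟨b, ⟨⟨hbA, hb2t⟩, hbt⟩, rfl⟩
        refine ⟨⟨hbt, by simpa using hb2t⟩, ?_, ?_⟩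
        · exact (hsym (b + -t)).mp hbt
        · have he : -(b + -t) - t = -b := by ring
          rw [he]
          exact (hsym b).mp hbA,
    Finset.sum_image (fun a _ b _ h => by omega)]
  push_cast
  rfl

lemma norm_shift_sum (hsym : ∀ a : ℤ, a ∈ A' ↔ -a ∈ A') (hL : 1 ≤ L)
    (hpos : ∀ x : ℝ, 0 ≤ (fhat A' x).re + L) (s : ℤ) (u : ℝ) :
    ‖∑ b ∈ A', eC (((b + s:ℤ):ℝ) * u)‖ ≤ Pf A' L u := by
  have hfac : (∑ b ∈ A', eC (((b + s:ℤ):ℝ) * u)) = eC ((s:ℝ) * u) * fhat A' u := by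
    rw [fhat, Finset.mul_sum]
    refine Finset.sum_congr rfl fun b _ => ?_
    rw [← eC_add]
    congr 1
    push_cast
    ring
  rw [hfac, norm_mul, eC_abs, one_mul]
  exact norm_fhat_le hsym hL hpos u

end main3

section main4
variable {A' : Finset ℤ} {L : ℝ}

lemma normJ2_bound (h0 : (0:ℤ) ∉ A') (hsym : ∀ a : ℤ, a ∈ A' ↔ -a ∈ A') (hL : 1 ≤ L)
    (hpos : ∀ x : ℝ, 0 ≤ (fhat A' x).re + L) (t : ℤ) (x : ℝ) :
    ‖fhat (A' ∩ shiftS A' t) x‖ ≤ (fhat A' x).re + (2*L)^2 := by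
  rw [← J2_eq t x]
  calc ‖∫ y in (0:ℝ)..1, (∑ a ∈ A', eC ((a:ℝ) * y)) * (∑ b ∈ A', eC (((b + t:ℤ):ℝ) * (x - y)))‖
      ≤ ∫ y in (0:ℝ)..1, ‖(∑ a ∈ A', eC ((a:ℝ) * y)) * (∑ b ∈ A', eC (((b + t:ℤ):ℝ) * (x - y)))‖ :=
        intervalIntegral.norm_integral_le_integral_norm zero_le_one
    _ ≤ ∫ y in (0:ℝ)..1, Pf A' L y * Pf A' L (x - y) := by
        apply intervalIntegral.integral_mono_on zero_le_one
        · apply Continuous.intervalIntegrable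
          apply Continuous.norm
          fun_prop
        · apply Continuous.intervalIntegrable
          exact Pf_cont.mul (Pf_cont.comp (by fun_prop))
        · intro y _
          rw [norm_mul]
          have h1 : ‖∑ a ∈ A', eC ((a:ℝ) * y)‖ ≤ Pf A' L y := norm_fhat_le hsym hL hpos y
          have h2 : ‖∑ b ∈ A', eC (((b + t:ℤ):ℝ) * (x - y))‖ ≤ Pf A' L (x - y) :=
            norm_shift_sum hsym hL hpos t (x - y)
          exact mul_le_mul h1 h2 (norm_nonneg _) (Pf_nonneg hL hpos y)
    _ = (fhat A' x).re + (2*L)^2 := conv_PP h0 hsym x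

lemma normInner_bound (h0 : (0:ℤ) ∉ A') (hsym : ∀ a : ℤ, a ∈ A' ↔ -a ∈ A') (hL : 1 ≤ L)
    (hpos : ∀ x : ℝ, 0 ≤ (fhat A' x).re + L) (t : ℤ) (u : ℝ) :
    ‖∑ b ∈ A'.filter (fun b => b + -t - t ∈ A'), eC (((b + -t:ℤ):ℝ) * u)‖
      ≤ Pf A' L u + (2*L)^2 := by
  rw [← J3_inner t u]
  calc ‖∫ y in (0:ℝ)..1, (∑ a ∈ A', eC (((a + t:ℤ):ℝ) * y)) *
          (∑ b ∈ A', eC (((b + -t:ℤ):ℝ) * (u - y)))‖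
      ≤ ∫ y in (0:ℝ)..1, ‖(∑ a ∈ A', eC (((a + t:ℤ):ℝ) * y)) *
          (∑ b ∈ A', eC (((b + -t:ℤ):ℝ) * (u - y)))‖ :=
        intervalIntegral.norm_integral_le_integral_norm zero_le_one
    _ ≤ ∫ y in (0:ℝ)..1, Pf A' L y * Pf A' L (u - y) := by
        apply intervalIntegral.integral_mono_on zero_le_one
        · apply Continuous.intervalIntegrable
          apply Continuous.norm
          fun_prop
        · apply Continuous.intervalIntegrable
          exact Pf_cont.mul (Pf_cont.comp (by fun_prop))
        · intro y _
          rw [norm_mul]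
          exact mul_le_mul (norm_shift_sum hsym hL hpos t y)
            (norm_shift_sum hsym hL hpos (-t) (u - y)) (norm_nonneg _) (Pf_nonneg hL hpos y)
    _ = (fhat A' u).re + (2*L)^2 := conv_PP h0 hsym u
    _ ≤ Pf A' L u + (2*L)^2 := by
        unfold Pf
        nlinarith [hL]

lemma normJ3_bound (h0 : (0:ℤ) ∉ A') (hsym : ∀ a : ℤ, a ∈ A' ↔ -a ∈ A') (hL : 1 ≤ L)
    (hpos : ∀ x : ℝ, 0 ≤ (fhat A' x).re + L) (t : ℤ) (x : ℝ) :
    ‖fhat ((A' ∩ shiftS A' t) ∩ negS (A' ∩ shiftS A' t)) x‖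
      ≤ (fhat A' x).re + (2*L)^2 + (2*L)^2 * (2*L) := by
  rw [← J3_eq hsym t x]
  calc ‖∫ y in (0:ℝ)..1, (∑ a ∈ A', eC ((a:ℝ) * y)) *
          (∑ b ∈ A'.filter (fun b => b + -t - t ∈ A'), eC (((b + -t:ℤ):ℝ) * (x - y)))‖
      ≤ ∫ y in (0:ℝ)..1, ‖(∑ a ∈ A', eC ((a:ℝ) * y)) *
          (∑ b ∈ A'.filter (fun b => b + -t - t ∈ A'), eC (((b + -t:ℤ):ℝ) * (x - y)))‖ :=
        intervalIntegral.norm_integral_le_integral_norm zero_le_one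
    _ ≤ ∫ y in (0:ℝ)..1, Pf A' L y * (Pf A' L (x - y) + (2*L)^2) := by
        apply intervalIntegral.integral_mono_on zero_le_one
        · apply Continuous.intervalIntegrable
          apply Continuous.norm
          fun_prop
        · apply Continuous.intervalIntegrable
          exact Pf_cont.mul ((Pf_cont.comp (by fun_prop)).add continuous_const)
        · intro y _
          rw [norm_mul]
          exact mul_le_mul (norm_fhat_le hsym hL hpos y)
            (normInner_bound h0 hsym hL hpos t (x - y)) (norm_nonneg _) (Pf_nonneg hL hpos y)
    _ = (fhat A' x).re + (2*L)^2 + (2*L)^2 * (2*L) := by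
        rw [show (fun y : ℝ => Pf A' L y * (Pf A' L (x - y) + (2*L)^2))
            = fun y : ℝ => Pf A' L y * Pf A' L (x - y) + Pf A' L y * (2*L)^2 from
          funext fun y => by ring]
        have hi1 : IntervalIntegrable (fun y : ℝ => Pf A' L y * Pf A' L (x - y))
            MeasureTheory.volume 0 1 := (Continuous.intervalIntegrable (by fun_prop)) _ _
        have hi2 : IntervalIntegrable (fun y : ℝ => Pf A' L y * (2*L)^2)
            MeasureTheory.volume 0 1 := (Continuous.intervalIntegrable (by fun_prop)) _ _
        rw [intervalIntegral.integral_add hi1 hi2,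
          intervalIntegral.integral_mul_const, conv_PP h0 hsym x, int_P h0 hsym]
        ring

end main4

/-- Decomposition `1̂_{B'_t} = Q₁ + Q₂` with `|Q₁| ≤ 4(1̂_{A'} + L)` pointwise and
`‖Q₂‖_∞ ≤ C·L³`, where `B'_t = (A' ∩ (A'+t)) \ (-(A' ∩ (A'+t)))`. -/
theorem Bt_decomposition :
    ∃ C : ℝ, 0 < C ∧
      ∀ A' : Finset ℤ, (0 : ℤ) ∉ A' → (∀ a : ℤ, a ∈ A' ↔ -a ∈ A') →
        ∀ L : ℝ, 1 ≤ L → (∀ x : ℝ, 0 ≤ (fhat A' x).re + L) →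
          ∀ t : ℤ, t ≠ 0 →
            ∃ Q₁ Q₂ : ℝ → ℂ,
              (∀ x : ℝ, fhat ((A' ∩ shiftS A' t) \ negS (A' ∩ shiftS A' t)) x
                  = Q₁ x + Q₂ x) ∧
              (∀ x : ℝ, ‖Q₁ x‖ ≤ 4 * ((fhat A' x).re + L)) ∧
              (∀ x : ℝ, ‖Q₂ x‖ ≤ C * L ^ 3) := by
  refine ⟨32, by norm_num, ?_⟩
  intro A' h0 hsym L hL hpos t _
  set S := A' ∩ shiftS A' t with hS
  set B := S \ negS S with hB
  have hfhat_split : ∀ x : ℝ, fhat B x = fhat S x - fhat (S ∩ negS S) x := by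
    intro x
    have hsdiff : B = S \ (S ∩ negS S) := by
      ext m; simp only [hB, Finset.mem_sdiff, Finset.mem_inter]; tauto
    rw [hsdiff, fhat, Finset.sum_sdiff_eq_sub Finset.inter_subset_left, fhat, fhat]
  have habsB : ∀ x : ℝ, ‖fhat B x‖ ≤ 2 * ((fhat A' x).re + L) + 16 * L^3 := by
    intro x
    rw [hfhat_split x]
    calc ‖fhat S x - fhat (S ∩ negS S) x‖
        ≤ ‖fhat S x‖ + ‖fhat (S ∩ negS S) x‖ := by
          exact (norm_sub_le _ _)
      _ ≤ ((fhat A' x).re + (2*L)^2) + ((fhat A' x).re + (2*L)^2 + (2*L)^2 * (2*L)) := by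
          exact add_le_add (normJ2_bound h0 hsym hL hpos t x) (normJ3_bound h0 hsym hL hpos t x)
      _ ≤ 2 * ((fhat A' x).re + L) + 16 * L^3 := by nlinarith [hL]
  refine ⟨fun x => if 8 * L^3 ≤ (fhat A' x).re + L then fhat B x else 0,
          fun x => if 8 * L^3 ≤ (fhat A' x).re + L then 0 else fhat B x, ?_, ?_, ?_⟩
  · intro x
    by_cases h : 8 * L^3 ≤ (fhat A' x).re + L <;> simp [h]
  · intro x
    by_cases h : 8 * L^3 ≤ (fhat A' x).re + L
    · simp only [if_pos h]
      calc ‖fhat B x‖ ≤ 2 * ((fhat A' x).re + L) + 16 * L^3 := habsB x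
        _ ≤ 4 * ((fhat A' x).re + L) := by nlinarith [hL]
    · simp only [if_neg h, norm_zero]
      exact mul_nonneg (by norm_num) (hpos x)
  · intro x
    by_cases h : 8 * L^3 ≤ (fhat A' x).re + L
    · simp only [if_pos h, norm_zero]
      positivity
    · simp only [if_neg h]
      push_neg at h
      calc ‖fhat B x‖ ≤ 2 * ((fhat A' x).re + L) + 16 * L^3 := habsB x
        _ ≤ 32 * L^3 := by nlinarith [hL]
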